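/- Let A be a real n×n matrix, B a real n×m matrix, and C a real m×n matrix, and set R = C·B + Bᵀ·Cᵀ. Suppose R is invertible and P is an invertible (in particular, symmetric positive definite) real n×n matrix satisfying the algebraic Riccati equation P·A + Aᵀ·P + (C·A − Bᵀ·P)ᵀ·R⁻¹·(C·A − Bᵀ·P) = 0. Then Z = P⁻¹ satisfies Z·A₀ᵀ + A₀·Z + Z·Q̄·Z + B·R⁻¹·Bᵀ = 0, where A₀ = A − B·R⁻¹·C·A and Q̄ = Aᵀ·Cᵀ·R⁻¹·C·A. -/

import Mathlib

open Matrix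

/-- If `P` (invertible, in particular symmetric positive definite) solves the
NI ARE, then `Z = P⁻¹` solves the dual Riccati equation. -/
theorem stmt_1 {n m : ℕ} (A : Matrix (Fin n) (Fin n) ℝ)
    (B : Matrix (Fin n) (Fin m) ℝ) (C : Matrix (Fin m) (Fin n) ℝ)
    (R : Matrix (Fin m) (Fin m) ℝ) (hR : R = C * B + Bᵀ * Cᵀ)
    (hRu : IsUnit R.det)
    (P : Matrix (Fin n) (Fin n) ℝ) (hP : P.PosDef) (hPu : IsUnit P.det)
    (hare : P * A + Aᵀ * P + (C * A - Bᵀ * P)ᵀ * R⁻¹ * (C * A - Bᵀ * P) = 0)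
    (Z : Matrix (Fin n) (Fin n) ℝ) (hZ : Z = P⁻¹)
    (A₀ : Matrix (Fin n) (Fin n) ℝ) (hA₀ : A₀ = A - B * R⁻¹ * (C * A))
    (Qbar : Matrix (Fin n) (Fin n) ℝ) (hQbar : Qbar = Aᵀ * Cᵀ * R⁻¹ * (C * A)) :
    Z * A₀ᵀ + A₀ * Z + Z * Qbar * Z + B * R⁻¹ * Bᵀ = 0 := by
  subst hZ hA₀ hQbar
  have hPt : Pᵀ = P := by
    have := hP.1
    simpa [Matrix.IsHermitian, Matrix.conjTranspose_eq_transpose_of_trivial] using this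
  have hRt : Rᵀ = R := by
    rw [hR]; simp [transpose_add, transpose_mul]; abel
  have hRit : (R⁻¹)ᵀ = R⁻¹ := by
    rw [transpose_nonsing_inv, hRt]
  have key : P⁻¹ * (P * A + Aᵀ * P + (C * A - Bᵀ * P)ᵀ * R⁻¹ * (C * A - Bᵀ * P)) * P⁻¹ = 0 := by
    rw [hare]; simp
  rw [← key]
  simp only [transpose_sub, transpose_mul, transpose_transpose, hPt, hRit, Matrix.mul_add,
    Matrix.add_mul, Matrix.mul_sub, Matrix.sub_mul, Matrix.mul_assoc,
    Matrix.nonsing_inv_mul_cancel_left _ _ hPu, Matrix.mul_nonsing_inv_cancel_left _ _ hPu,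
    Matrix.nonsing_inv_mul _ hPu, Matrix.mul_nonsing_inv _ hPu, Matrix.mul_one, Matrix.one_mul]
  abel
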